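/- arXiv:2503.22386 — 3 statements merged into one kernel-verified Lean document; each statement's English description precedes it below -/
import Mathlib

section
/- Let (Ω̂, μ) be a finite measure space and N ≥ 2 an integer. Let A : ℝ^{N−1} → ℝ^{N−1} be measurable and suppose there exist constants C_A, C_L > 0 such that for all u, v ∈ ℝ^{N−1}: |u − v|² ≤ C_A |A(u) − A(v)|² (stability) and |A(u) − A(v)|² ≤ C_L |u − v|² (Lipschitz continuity). Let ω* : Ω̂ → ℝ^{N−1} be a bounded measurable function and set F(Υ) = A(ω*(Υ)). For each n ≥ 1 let 𝔑_n be a nonempty set of bounded measurable functions Ω̂ → ℝ^{N−1} such that lim_{n→∞} inf_{g ∈ 𝔑_n} sup_{Υ ∈ Ω̂} |g(Υ) − ω*(Υ)| = 0, and let ω̂_n ∈ 𝔑_n satisfy 𝔏(ω̂_n) = inf_{g ∈ 𝔑_n} 𝔏(g). Then ∫_{Ω̂} |ω*(Υ) − ω̂_n(Υ)|² dμ(Υ) → 0 as n → ∞. -/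
open MeasureTheory Filter
open scoped ENNReal


private lemma sq_nnnorm_ofReal' {E : Type*} [NormedAddCommGroup E] (x : E) :
    (‖x‖₊ : ℝ≥0∞) ^ 2 = ENNReal.ofReal (‖x‖ ^ 2) := by
  rw [ENNReal.ofReal_pow (norm_nonneg _), ofReal_norm, enorm_eq_nnnorm]

/-- **Convergence of the approximation error (Theorem 4.1 / `2st-convergence-theorem`).**
Let `A : ℝ^{N-1} → ℝ^{N-1}` be measurable, satisfying a stability estimate
`‖u - v‖² ≤ C_A ‖A u - A v‖²` and a Lipschitz estimate `‖A u - A v‖² ≤ C_L ‖u - v‖²`.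
Let `F = A ∘ ω*` for a bounded measurable target `ω*`, and for each `n` let `ωn n` be a
minimizer of the loss `𝔏(g) = ∫ ‖A(g(Υ)) - F(Υ)‖² dμ` over the class `𝔑 n` of bounded
measurable functions.  If the classes `𝔑 n` approximate `ω*` uniformly in the limit,
then `∫ ‖ω* - ωn n‖² dμ → 0`. -/
theorem approximation_error_tendsto_zero
    {Ωhat : Type*} [MeasurableSpace Ωhat] (μ : Measure Ωhat) [IsFiniteMeasure μ]
    (N : ℕ) (hN : 2 ≤ N)
    (A : EuclideanSpace ℝ (Fin (N - 1)) → EuclideanSpace ℝ (Fin (N - 1)))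
    (hA : Measurable A)
    (CA CL : ℝ) (hCA : 0 < CA) (hCL : 0 < CL)
    (hstab : ∀ u v : EuclideanSpace ℝ (Fin (N - 1)), ‖u - v‖ ^ 2 ≤ CA * ‖A u - A v‖ ^ 2)
    (hlip : ∀ u v : EuclideanSpace ℝ (Fin (N - 1)), ‖A u - A v‖ ^ 2 ≤ CL * ‖u - v‖ ^ 2)
    (ωstar : Ωhat → EuclideanSpace ℝ (Fin (N - 1))) (hωstar : Measurable ωstar)
    (hωstar_bdd : ∃ C : ℝ, ∀ Υ, ‖ωstar Υ‖ ≤ C)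
    (F : Ωhat → EuclideanSpace ℝ (Fin (N - 1))) (hF : ∀ Υ, F Υ = A (ωstar Υ))
    (𝔑 : ℕ → Set (Ωhat → EuclideanSpace ℝ (Fin (N - 1))))
    (h𝔑_ne : ∀ n, (𝔑 n).Nonempty)
    (h𝔑 : ∀ n, ∀ g ∈ 𝔑 n, Measurable g ∧ ∃ C : ℝ, ∀ Υ, ‖g Υ‖ ≤ C)
    (happrox : Tendsto
      (fun n => ⨅ g ∈ 𝔑 n, ⨆ Υ, (‖g Υ - ωstar Υ‖₊ : ℝ≥0∞)) atTop (nhds 0))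
    (ωn : ℕ → Ωhat → EuclideanSpace ℝ (Fin (N - 1)))
    (hωn_mem : ∀ n, ωn n ∈ 𝔑 n)
    (hωn_min : ∀ n,
      (∫⁻ Υ, (‖A (ωn n Υ) - F Υ‖₊ : ℝ≥0∞) ^ 2 ∂μ)
        = ⨅ g ∈ 𝔑 n, ∫⁻ Υ, (‖A (g Υ) - F Υ‖₊ : ℝ≥0∞) ^ 2 ∂μ) :
    Tendsto (fun n => ∫⁻ Υ, (‖ωstar Υ - ωn n Υ‖₊ : ℝ≥0∞) ^ 2 ∂μ) atTop (nhds 0) := by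
  rw [ENNReal.tendsto_nhds_zero]
  intro ε hε
  set K : ℝ≥0∞ := ENNReal.ofReal CA * ENNReal.ofReal CL * μ Set.univ + 1 with hKdef
  have hK0 : K ≠ 0 := by simp [hKdef]
  have hKtop : K ≠ ∞ := by
    refine ENNReal.add_ne_top.2 ⟨?_, ENNReal.one_ne_top⟩
    exact ENNReal.mul_ne_top (ENNReal.mul_ne_top ENNReal.ofReal_ne_top ENNReal.ofReal_ne_top)
      (measure_ne_top μ _)
  set δ : ℝ≥0∞ := min (ε / K) 1 with hδdef
  have hδ0 : 0 < δ := lt_min (ENNReal.div_pos hε.ne' hKtop) one_pos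
  have hev : ∀ᶠ n in atTop, (⨅ g ∈ 𝔑 n, ⨆ Υ, (‖g Υ - ωstar Υ‖₊ : ℝ≥0∞)) < δ :=
    happrox.eventually_lt_const hδ0
  filter_upwards [hev] with n hn
  obtain ⟨g, hgS⟩ := iInf_lt_iff.mp hn
  obtain ⟨hg, hS⟩ := iInf_lt_iff.mp hgS
  have step1 : (∫⁻ Υ, (‖ωstar Υ - ωn n Υ‖₊ : ℝ≥0∞) ^ 2 ∂μ)
      ≤ ENNReal.ofReal CA * ∫⁻ Υ, (‖A (ωn n Υ) - F Υ‖₊ : ℝ≥0∞) ^ 2 ∂μ := by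
    rw [← lintegral_const_mul' _ _ ENNReal.ofReal_ne_top]
    refine lintegral_mono fun Υ => ?_
    rw [sq_nnnorm_ofReal', sq_nnnorm_ofReal', hF, ← ENNReal.ofReal_mul hCA.le]
    have h := hstab (ωstar Υ) (ωn n Υ)
    rw [norm_sub_rev (A (ωstar Υ))] at h
    exact ENNReal.ofReal_le_ofReal h
  have step2 : (∫⁻ Υ, (‖A (ωn n Υ) - F Υ‖₊ : ℝ≥0∞) ^ 2 ∂μ)
      ≤ ∫⁻ Υ, (‖A (g Υ) - F Υ‖₊ : ℝ≥0∞) ^ 2 ∂μ := by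
    rw [hωn_min n]
    exact iInf₂_le g hg
  have step3 : (∫⁻ Υ, (‖A (g Υ) - F Υ‖₊ : ℝ≥0∞) ^ 2 ∂μ)
      ≤ ENNReal.ofReal CL * δ ^ 2 * μ Set.univ := by
    have hpt : ∀ Υ, (‖A (g Υ) - F Υ‖₊ : ℝ≥0∞) ^ 2 ≤ ENNReal.ofReal CL * δ ^ 2 := by
      intro Υ
      have h1 : (‖A (g Υ) - F Υ‖₊ : ℝ≥0∞) ^ 2
          ≤ ENNReal.ofReal CL * (‖g Υ - ωstar Υ‖₊ : ℝ≥0∞) ^ 2 := by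
        rw [sq_nnnorm_ofReal', sq_nnnorm_ofReal', hF, ← ENNReal.ofReal_mul hCL.le]
        exact ENNReal.ofReal_le_ofReal (hlip _ _)
      refine h1.trans (mul_le_mul_right (pow_le_pow_left' ?_ 2) _)
      exact ((le_iSup (fun Υ => (‖g Υ - ωstar Υ‖₊ : ℝ≥0∞)) Υ).trans hS.le)
    calc (∫⁻ Υ, (‖A (g Υ) - F Υ‖₊ : ℝ≥0∞) ^ 2 ∂μ)
        ≤ ∫⁻ _, ENNReal.ofReal CL * δ ^ 2 ∂μ := lintegral_mono hpt
      _ = ENNReal.ofReal CL * δ ^ 2 * μ Set.univ := lintegral_const _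
  have hchain : (∫⁻ Υ, (‖ωstar Υ - ωn n Υ‖₊ : ℝ≥0∞) ^ 2 ∂μ) ≤ K * δ ^ 2 := by
    refine (step1.trans (mul_le_mul_right (step2.trans step3) _)).trans ?_
    have : ENNReal.ofReal CA * (ENNReal.ofReal CL * δ ^ 2 * μ Set.univ)
        = (ENNReal.ofReal CA * ENNReal.ofReal CL * μ Set.univ) * δ ^ 2 := by ring
    rw [this]
    exact mul_le_mul_left (by rw [hKdef]; exact le_self_add) _
  refine hchain.trans ?_
  have hδ1 : δ ≤ 1 := min_le_right _ _
  have hδε : δ ≤ ε / K := min_le_left _ _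
  have : δ ^ 2 ≤ ε / K := by
    calc δ ^ 2 = δ * δ := sq δ
      _ ≤ 1 * (ε / K) := mul_le_mul' hδ1 hδε
      _ = ε / K := one_mul _
  calc K * δ ^ 2 ≤ K * (ε / K) := mul_le_mul_right this _
    _ = ε := ENNReal.mul_div_cancel hK0 hKtop
end

section
/- Let X > 0, let n ≥ 1 be an integer, let ζ ∈ (0,1), and let x ∈ (0, X]. Then (1/Γ(1−ζ)) ∫_0^x (x − s)^{−ζ} (d/ds) P̂_n(s) ds = Σ_{k=1}^n (−1)^{n+k} Γ(k+1) (n+k)! x^{k−ζ} / (X^k (n−k)! Γ(k+1−ζ) (k!)²); that is, the Caputo fractional derivative of order ζ of the shifted Legendre polynomial P̂_n equals the stated finite sum. -/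
/-- The shifted Legendre polynomial of degree `n` on `[0, X]`:
`P̂_n(x) = Σ_{k=0}^n (−1)^{n+k} (n+k)! x^k / (X^k (n−k)! (k!)²)`. -/
noncomputable def shiftedLegendre (X : ℝ) (n : ℕ) (x : ℝ) : ℝ :=
  ∑ k ∈ Finset.range (n + 1),
    (-1 : ℝ) ^ (n + k) * ((n + k).factorial : ℝ) * x ^ k /
      (X ^ k * ((n - k).factorial : ℝ) * ((k.factorial : ℝ)) ^ 2)

open intervalIntegral in
lemma beta_aux (k : ℕ) (hk : 1 ≤ k) {ζ : ℝ} (h0 : 0 < ζ) (h1 : ζ < 1) {x : ℝ} (hx : 0 < x) :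
    ∫ s in (0:ℝ)..x, (x - s) ^ (-ζ) * s ^ (k - 1) =
      Real.Gamma k * Real.Gamma (1 - ζ) / Real.Gamma ((k:ℝ) + 1 - ζ) * x ^ ((k:ℝ) - ζ) := by
  have hv : (0:ℝ) < 1 - ζ := by linarith
  have hscaled := Complex.betaIntegral_scaled (k:ℂ) ((1:ℂ) - ζ) hx
  have hgamma := Complex.Gamma_mul_Gamma_eq_betaIntegral
    (s := (k:ℂ)) (t := (1:ℂ) - ζ) (by simp; exact_mod_cast Nat.pos_of_ne_zero (by omega))
    (by simp [Complex.sub_re]; linarith)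
  have hGne : Complex.Gamma ((k:ℂ) + ((1:ℂ) - ζ)) ≠ 0 := by
    apply Complex.Gamma_ne_zero_of_re_pos
    simp [Complex.add_re, Complex.sub_re]
    push_cast
    nlinarith [Nat.one_le_cast (α := ℝ) |>.mpr hk]
  have hbeta : Complex.betaIntegral (k:ℂ) ((1:ℂ) - ζ) =
      Complex.Gamma (k:ℂ) * Complex.Gamma ((1:ℂ) - ζ) / Complex.Gamma ((k:ℂ) + ((1:ℂ) - ζ)) := by
    rw [hgamma]; field_simp
  have hcongr : (∫ s in (0:ℝ)..x, (((x - s) ^ (-ζ) * s ^ (k - 1) : ℝ) : ℂ)) =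
      ∫ s in (0:ℝ)..x, (s:ℂ) ^ ((k:ℂ) - 1) * ((x:ℂ) - s) ^ (((1:ℂ) - ζ) - 1) := by
    apply intervalIntegral.integral_congr
    intro s hs
    rw [Set.uIcc_of_le hx.le] at hs
    have hs0 : 0 ≤ s := hs.1
    have hsx : 0 ≤ x - s := by linarith [hs.2]
    have e1 : ((k:ℂ) - 1) = ((k - 1 : ℕ) : ℂ) := by
      push_cast [Nat.cast_sub hk]; ring
    have e2 : (((1:ℂ) - ζ) - 1) = ((-ζ : ℝ) : ℂ) := by push_cast; ring
    beta_reduce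
    rw [e1, e2, Complex.cpow_natCast,
      show ((x:ℂ) - s) = ((x - s : ℝ):ℂ) by push_cast; ring,
      ← Complex.ofReal_cpow hsx]
    push_cast
    ring
  rw [intervalIntegral.integral_ofReal] at hcongr
  have hfinal : ((∫ s in (0:ℝ)..x, (x - s) ^ (-ζ) * s ^ (k - 1) : ℝ) : ℂ) =
      ((Real.Gamma k * Real.Gamma (1 - ζ) / Real.Gamma ((k:ℝ) + 1 - ζ) * x ^ ((k:ℝ) - ζ) : ℝ) : ℂ) := by
    rw [hcongr, hscaled, hbeta]
    have e3 : (k:ℂ) + ((1:ℂ) - ζ) - 1 = (((k:ℝ) - ζ : ℝ) : ℂ) := by push_cast; ring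
    have e4 : (k:ℂ) + ((1:ℂ) - ζ) = (((k:ℝ) + 1 - ζ : ℝ) : ℂ) := by push_cast; ring
    rw [e3, e4, ← Complex.ofReal_cpow hx.le]
    rw [show ((1:ℂ) - ζ) = ((1 - ζ : ℝ) : ℂ) by push_cast; ring]
    rw [show ((k:ℂ)) = (((k:ℝ)) : ℂ) by push_cast; ring]
    rw [Complex.Gamma_ofReal, Complex.Gamma_ofReal, Complex.Gamma_ofReal]
    push_cast
    ring
  exact_mod_cast hfinal

lemma shiftedLegendre_hasDerivAt (X : ℝ) (n : ℕ) (s : ℝ) :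
    HasDerivAt (shiftedLegendre X n)
      (∑ k ∈ Finset.range (n + 1),
        (-1 : ℝ) ^ (n + k) * ((n + k).factorial : ℝ) /
          (X ^ k * ((n - k).factorial : ℝ) * ((k.factorial : ℝ)) ^ 2) *
          ((k : ℝ) * s ^ (k - 1))) s := by
  unfold shiftedLegendre
  apply HasDerivAt.fun_sum
  intro k _
  have h := ((hasDerivAt_pow k s).const_mul
    ((-1 : ℝ) ^ (n + k) * ((n + k).factorial : ℝ))).div_const
    (X ^ k * ((n - k).factorial : ℝ) * ((k.factorial : ℝ)) ^ 2)
  convert h using 1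
  exacts [rfl, by ring]

/-- **Caputo fractional derivative of the shifted Legendre polynomial.**
For `ζ ∈ (0,1)` and `x ∈ (0, X]`,
`(1/Γ(1−ζ)) ∫₀ˣ (x−s)^{−ζ} P̂_n'(s) ds
  = Σ_{k=1}^n (−1)^{n+k} Γ(k+1) (n+k)! x^{k−ζ} / (X^k (n−k)! Γ(k+1−ζ) (k!)²)`. -/
theorem caputo_deriv_shiftedLegendre (X : ℝ) (hX : 0 < X) (n : ℕ) (hn : 1 ≤ n)
    (ζ : ℝ) (hζ : ζ ∈ Set.Ioo (0:ℝ) 1) (x : ℝ) (hx : x ∈ Set.Ioc 0 X) :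
    (1 / Real.Gamma (1 - ζ)) *
      ∫ s in (0:ℝ)..x, (x - s) ^ (-ζ) * deriv (shiftedLegendre X n) s
      = ∑ k ∈ Finset.Icc 1 n,
        (-1 : ℝ) ^ (n + k) * Real.Gamma ((k : ℝ) + 1) * ((n + k).factorial : ℝ) *
            x ^ ((k : ℝ) - ζ) /
          (X ^ k * ((n - k).factorial : ℝ) * Real.Gamma ((k : ℝ) + 1 - ζ) *
            ((k.factorial : ℝ)) ^ 2) := by
  obtain ⟨hζ0, hζ1⟩ := hζ
  obtain ⟨hx0, hxX⟩ := hx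
  have hderiv : deriv (shiftedLegendre X n) = fun s =>
      ∑ k ∈ Finset.range (n + 1),
        (-1 : ℝ) ^ (n + k) * ((n + k).factorial : ℝ) /
          (X ^ k * ((n - k).factorial : ℝ) * ((k.factorial : ℝ)) ^ 2) *
          ((k : ℝ) * s ^ (k - 1)) := funext fun s => (shiftedLegendre_hasDerivAt X n s).deriv
  rw [hderiv]
  have hint : ∀ k ∈ Finset.range (n + 1),
      IntervalIntegrable (fun s => (x - s) ^ (-ζ) *
        ((-1 : ℝ) ^ (n + k) * ((n + k).factorial : ℝ) /
          (X ^ k * ((n - k).factorial : ℝ) * ((k.factorial : ℝ)) ^ 2) *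
          ((k : ℝ) * s ^ (k - 1)))) MeasureTheory.volume 0 x := by
    intro k _
    apply IntervalIntegrable.mul_continuousOn
    · have := (intervalIntegral.intervalIntegrable_rpow' (a := x) (b := 0) (r := -ζ)
        (by linarith)).comp_sub_left x
      simpa using this
    · exact Continuous.continuousOn (by continuity)
  simp_rw [Finset.mul_sum]
  rw [intervalIntegral.integral_finset_sum hint, Finset.mul_sum]
  have hsplit : Finset.range (n + 1) = insert 0 (Finset.Icc 1 n) := by
    ext m; simp [Finset.mem_range, Finset.mem_Icc]; omega
  rw [hsplit, Finset.sum_insert (by simp)]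
  have h0 : (1 / Real.Gamma (1 - ζ)) * ∫ s in (0:ℝ)..x, (x - s) ^ (-ζ) *
      ((-1 : ℝ) ^ (n + 0) * ((n + 0).factorial : ℝ) /
        (X ^ 0 * ((n - 0).factorial : ℝ) * (((0:ℕ).factorial : ℝ)) ^ 2) *
        (((0:ℕ) : ℝ) * s ^ (0 - 1))) = 0 := by
    simp
  rw [h0, zero_add]
  apply Finset.sum_congr rfl
  intro k hk
  rw [Finset.mem_Icc] at hk
  obtain ⟨hk1, hkn⟩ := hk
  have hkR : (1:ℝ) ≤ (k:ℝ) := by exact_mod_cast hk1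
  have hre : (∫ s in (0:ℝ)..x, (x - s) ^ (-ζ) *
      ((-1 : ℝ) ^ (n + k) * ((n + k).factorial : ℝ) /
        (X ^ k * ((n - k).factorial : ℝ) * ((k.factorial : ℝ)) ^ 2) *
        ((k : ℝ) * s ^ (k - 1)))) =
      ((-1 : ℝ) ^ (n + k) * ((n + k).factorial : ℝ) /
        (X ^ k * ((n - k).factorial : ℝ) * ((k.factorial : ℝ)) ^ 2) * (k : ℝ)) *
      ∫ s in (0:ℝ)..x, (x - s) ^ (-ζ) * s ^ (k - 1) := by
    rw [← intervalIntegral.integral_const_mul]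
    apply intervalIntegral.integral_congr
    intro s _
    beta_reduce
    ring
  rw [hre, beta_aux k hk1 hζ0 hζ1 hx0]
  have hGk : Real.Gamma ((k:ℝ) + 1) = (k:ℝ) * Real.Gamma (k:ℝ) :=
    Real.Gamma_add_one (by linarith)
  have hG1 : 0 < Real.Gamma (1 - ζ) := Real.Gamma_pos_of_pos (by linarith)
  have hG2 : 0 < Real.Gamma ((k:ℝ) + 1 - ζ) := Real.Gamma_pos_of_pos (by linarith)
  have hXk : (X:ℝ) ^ k ≠ 0 := pow_ne_zero _ hX.ne'
  have hf1 : (((n - k).factorial : ℝ)) ≠ 0 := Nat.cast_ne_zero.mpr (Nat.factorial_ne_zero _)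
  have hf2 : ((k.factorial : ℝ)) ≠ 0 := Nat.cast_ne_zero.mpr (Nat.factorial_ne_zero _)
  rw [hGk]
  field_simp
end

section
/- Let X > 0 and let m, n ∈ ℕ. Then ∫_0^X P̂_n(x) P̂_m(x) dx = 0 if n ≠ m, and ∫_0^X P̂_n(x)² dx = X/(2n+1); i.e., the shifted Legendre polynomials are mutually orthogonal in L²([0, X]). -/
open Finset

lemma prod_shift (a : ℕ) : ∀ n : ℕ, (∏ i ∈ range n, ((a:ℝ) + 1 + i)) * a.factorial = (a + n).factorial
  | 0 => by simp
  | n + 1 => by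
    rw [prod_range_succ, mul_right_comm, prod_shift a n]
    push_cast [Nat.factorial_succ, ← Nat.add_assoc]
    ring

lemma prod_descend (m : ℕ) : (∏ i ∈ range m, ((m:ℝ) - i)) = m.factorial := by
  rw [← Finset.prod_range_reflect]
  have : ∀ j ∈ range m, ((m:ℝ) - (m - 1 - j : ℕ)) = ((j + 1 : ℕ) : ℝ) := by
    intro j hj
    rw [mem_range] at hj
    rw [Nat.cast_sub (by omega), Nat.cast_sub (by omega)]
    push_cast; ring
  rw [Finset.prod_congr rfl this]
  exact_mod_cast congrArg (Nat.cast : ℕ → ℝ) (Finset.prod_range_add_one_eq_factorial m)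

lemma prod_cast_add_one (m : ℕ) : (∏ i ∈ range m, ((i:ℝ) + 1)) = m.factorial := by
  have := congrArg (Nat.cast : ℕ → ℝ) (Finset.prod_range_add_one_eq_factorial m)
  push_cast at this; exact this

lemma prod_erase_sub (n j0 : ℕ) (h : j0 ≤ n) :
    ∏ i ∈ (range (n+1)).erase j0, ((i:ℝ) - j0) =
      (-1:ℝ)^j0 * j0.factorial * (n-j0).factorial := by
  have hset : (range (n+1)).erase j0 = range j0 ∪ Ico (j0+1) (n+1) := by
    ext i; simp [mem_erase, mem_range, mem_union, mem_Ico]; omega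
  rw [hset, prod_union (by simp [Finset.disjoint_left, mem_range, mem_Ico]; omega)]
  have h1 : ∏ i ∈ range j0, ((i:ℝ) - j0) = (-1:ℝ)^j0 * j0.factorial := by
    have : ∀ i ∈ range j0, ((i:ℝ) - j0) = (-1) * ((j0:ℝ) - i) := by intro i _; ring
    rw [Finset.prod_congr rfl this, prod_mul_distrib, prod_const, card_range, prod_descend]
  have h2 : ∏ i ∈ Ico (j0+1) (n+1), ((i:ℝ) - j0) = (n-j0).factorial := by
    rw [Finset.prod_Ico_eq_prod_range]
    have he : n + 1 - (j0 + 1) = n - j0 := by omega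
    rw [he]
    have : ∀ i ∈ range (n - j0), ((j0 + 1 + i : ℕ) : ℝ) - j0 = (i:ℝ) + 1 := by
      intro i _
      push_cast
      try ring
    rw [Finset.prod_congr rfl this, prod_cast_add_one]
  rw [h1, h2]

noncomputable def Lc (n j : ℕ) : ℝ :=
  (-1:ℝ)^(n+j) * (n+j).factorial / ((n-j).factorial * ((j.factorial:ℝ))^2)

open Polynomial in
lemma keyS (n k : ℕ) :
    ∑ j ∈ range (n+1), Lc n j / ((j:ℝ) + k + 1) =
      (∏ i ∈ range n, ((k:ℝ) - i)) / (∏ i ∈ range (n+1), ((k:ℝ) + i + 1)) := by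
  set P : Polynomial ℝ := ∏ i ∈ range n, (X - C (i:ℝ)) with hP
  set Q : Polynomial ℝ :=
    ∑ j ∈ range (n+1), C (Lc n j) * ∏ i ∈ (range (n+1)).erase j, (X + C ((i:ℝ)+1)) with hQ
  have hPQ : P = Q := by
    apply Polynomial.eq_of_degrees_lt_of_eval_index_eq (range (n+1))
        (v := fun j : ℕ => -((j:ℝ)+1))
    · intro a _ b _ hab
      simp only [neg_inj, add_left_inj] at hab
      exact_mod_cast hab
    · rw [card_range]
      calc P.degree ≤ n := by
            rw [hP]
            refine le_trans (Polynomial.degree_prod_le _ _) ?_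
            refine le_trans (Finset.sum_le_sum (fun i _ => le_of_eq (Polynomial.degree_X_sub_C (i:ℝ)))) ?_
            rw [Finset.sum_const, card_range]
            simp
        _ < (n+1 : ℕ) := by exact_mod_cast Nat.lt_succ_self n
    · rw [card_range]
      refine lt_of_le_of_lt (Polynomial.degree_sum_le _ _) ?_
      rw [Finset.sup_lt_iff (by exact_mod_cast WithBot.bot_lt_coe (n+1))]
      intro j hj
      refine lt_of_le_of_lt (Polynomial.degree_mul_le _ _) ?_
      have h1 : (C (Lc n j)).degree ≤ 0 := Polynomial.degree_C_le
      have h2 : (∏ i ∈ (range (n+1)).erase j, (X + C ((i:ℝ)+1))).degree ≤ (n : WithBot ℕ) := by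
        refine le_trans (Polynomial.degree_prod_le _ _) ?_
        refine le_trans (Finset.sum_le_sum (fun i _ => le_of_eq (Polynomial.degree_X_add_C ((i:ℝ)+1)))) ?_
        rw [Finset.sum_const, Finset.card_erase_of_mem hj, card_range]
        simp
      calc (C (Lc n j)).degree + _ ≤ 0 + (n : WithBot ℕ) := add_le_add h1 h2
        _ = (n : WithBot ℕ) := zero_add _
        _ < (n+1 : ℕ) := by exact_mod_cast Nat.lt_succ_self n
    · intro j0 hj0
      rw [mem_range, Nat.lt_succ_iff] at hj0
      have hevP : P.eval (-((j0:ℝ)+1)) = (-1:ℝ)^n * ((j0+n).factorial / j0.factorial) := by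
        rw [hP, Polynomial.eval_prod]
        have : ∀ i ∈ range n, (X - C (i:ℝ)).eval (-((j0:ℝ)+1)) = (-1) * ((j0:ℝ)+1+i) := by
          intro i _; simp; ring
        rw [Finset.prod_congr rfl this, prod_mul_distrib, prod_const, card_range]
        have hps := prod_shift j0 n
        have hfac : (j0.factorial : ℝ) ≠ 0 := by positivity
        rw [show ((j0+n).factorial:ℝ)/(j0.factorial:ℝ) = ∏ i ∈ range n, ((j0:ℝ)+1+i) from by
          rw [← hps]; field_simp]
      have hevQ : Q.eval (-((j0:ℝ)+1)) = Lc n j0 * ((-1:ℝ)^j0 * j0.factorial * (n-j0).factorial) := by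
        rw [hQ, Polynomial.eval_finset_sum]
        rw [Finset.sum_eq_single j0]
        · rw [Polynomial.eval_mul, Polynomial.eval_C, Polynomial.eval_prod]
          congr 1
          rw [← prod_erase_sub n j0 hj0]
          refine Finset.prod_congr rfl fun i _ => ?_
          simp; ring
        · intro j hj hne
          rw [Polynomial.eval_mul, Polynomial.eval_prod]
          rw [Finset.prod_eq_zero (Finset.mem_erase.mpr ⟨fun h => hne h.symm, mem_range.mpr (Nat.lt_succ_of_le hj0)⟩)]
          · ring
          · simp only [Polynomial.eval_add, Polynomial.eval_X, Polynomial.eval_C]; ring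
        · intro h; exact absurd (mem_range.mpr (Nat.lt_succ_of_le hj0)) h
      rw [hevP, hevQ, Lc]
      have hs : (-1:ℝ)^(n+j0) * (-1:ℝ)^j0 = (-1:ℝ)^n := by
        rw [← pow_add, show n + j0 + j0 = n + 2*j0 by ring, pow_add, pow_mul]
        norm_num
      have hfac : ((n+j0).factorial : ℝ) = ((j0+n).factorial : ℝ) := by rw [Nat.add_comm]
      have h1 : ((n-j0).factorial : ℝ) ≠ 0 := by positivity
      have h2 : (j0.factorial : ℝ) ≠ 0 := by positivity
      field_simp
      rw [← hs, ← hfac]; ring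
  -- now evaluate at k
  have hD : (∏ i ∈ range (n+1), ((k:ℝ) + i + 1)) ≠ 0 := by positivity
  have hevPk : P.eval (k:ℝ) = ∏ i ∈ range n, ((k:ℝ) - i) := by
    rw [hP, Polynomial.eval_prod]; simp
  have hevQk : Q.eval (k:ℝ) =
      (∏ i ∈ range (n+1), ((k:ℝ) + i + 1)) * ∑ j ∈ range (n+1), Lc n j / ((j:ℝ) + k + 1) := by
    rw [hQ, Polynomial.eval_finset_sum, Finset.mul_sum]
    refine Finset.sum_congr rfl fun j hj => ?_
    rw [Polynomial.eval_mul, Polynomial.eval_C, Polynomial.eval_prod]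
    have hmul : ((k:ℝ) + j + 1) * ∏ i ∈ (range (n+1)).erase j, ((k:ℝ) + i + 1) =
        ∏ i ∈ range (n+1), ((k:ℝ) + i + 1) :=
      Finset.mul_prod_erase (range (n+1)) (fun i => (k:ℝ) + i + 1) hj
    have hne : ((k:ℝ) + j + 1) ≠ 0 := by positivity
    have : ∏ i ∈ (range (n+1)).erase j, ((X : Polynomial ℝ) + C ((i:ℝ)+1)).eval (k:ℝ) =
        ∏ i ∈ (range (n+1)).erase j, ((k:ℝ) + i + 1) := by
      refine Finset.prod_congr rfl fun i _ => by simp; ring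
    rw [this]
    field_simp
    rw [← hmul]
    ring
  rw [← hevPk, hPQ, hevQk]
  field_simp

lemma integral_eval (X : ℝ) (hX : 0 < X) (n m : ℕ) :
    ∫ x in (0:ℝ)..X, shiftedLegendre X n x * shiftedLegendre X m x =
      X * ∑ k ∈ range (m+1), Lc m k * ∑ j ∈ range (n+1), Lc n j / ((j:ℝ) + k + 1) := by
  have hXne : X ≠ 0 := ne_of_gt hX
  have h1 : ∀ x : ℝ, shiftedLegendre X n x * shiftedLegendre X m x =
      ∑ k ∈ range (m+1), ∑ j ∈ range (n+1), (Lc n j * Lc m k / X^(j+k)) * x^(j+k) := by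
    intro x
    unfold shiftedLegendre
    rw [Finset.sum_mul_sum, Finset.sum_comm]
    refine Finset.sum_congr rfl fun k hk => Finset.sum_congr rfl fun j hj => ?_
    rw [Lc, Lc, pow_add, pow_add]
    have f1 : ((n-j).factorial : ℝ) ≠ 0 := by positivity
    have f2 : ((m-k).factorial : ℝ) ≠ 0 := by positivity
    have f3 : (j.factorial : ℝ) ≠ 0 := by positivity
    have f4 : (k.factorial : ℝ) ≠ 0 := by positivity
    field_simp
    ring
  simp only [h1]
  rw [intervalIntegral.integral_finset_sum (f := fun k x => ∑ j ∈ range (n + 1), Lc n j * Lc m k / X ^ (j + k) * x ^ (j + k)) (fun k _ =>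
    ((continuous_finset_sum _ fun j _ =>
      (continuous_const.mul (continuous_pow _))).intervalIntegrable _ _))]
  rw [Finset.mul_sum]
  refine Finset.sum_congr rfl fun k hk => ?_
  rw [intervalIntegral.integral_finset_sum (f := fun j x => Lc n j * Lc m k / X ^ (j + k) * x ^ (j + k)) (fun j _ =>
    ((continuous_const.mul (continuous_pow _)).intervalIntegrable _ _))]
  rw [Finset.mul_sum, Finset.mul_sum]
  refine Finset.sum_congr rfl fun j hj => ?_
  rw [intervalIntegral.integral_const_mul, integral_pow]
  have hden : ((j:ℝ) + k + 1) ≠ 0 := by positivity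
  have hpow : X ^ (j + k) ≠ 0 := pow_ne_zero _ hXne
  rw [zero_pow (Nat.succ_ne_zero _)]
  push_cast
  rw [pow_succ]
  field_simp
  ring

lemma ortho_lt (X : ℝ) (hX : 0 < X) {n m : ℕ} (h : m < n) :
    ∫ x in (0:ℝ)..X, shiftedLegendre X n x * shiftedLegendre X m x = 0 := by
  rw [integral_eval X hX n m]
  have : ∀ k ∈ range (m+1), Lc m k * ∑ j ∈ range (n+1), Lc n j / ((j:ℝ) + k + 1) = 0 := by
    intro k hk
    rw [mem_range, Nat.lt_succ_iff] at hk
    rw [keyS n k]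
    rw [Finset.prod_eq_zero (mem_range.mpr (lt_of_le_of_lt hk h)) (by simp : ((k:ℝ) - k) = 0)]
    simp
  rw [Finset.sum_congr rfl this]
  simp

lemma diag_eval (X : ℝ) (hX : 0 < X) (n : ℕ) :
    ∫ x in (0:ℝ)..X, shiftedLegendre X n x * shiftedLegendre X n x = X / (2 * (n:ℝ) + 1) := by
  rw [integral_eval X hX n n]
  rw [Finset.sum_eq_single n]
  · rw [keyS n n, prod_descend]
    have hpr : (∏ i ∈ range (n+1), ((n:ℝ) + i + 1)) * n.factorial = (2*n+1).factorial := by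
      have hps := prod_shift n (n+1)
      have hc : ∀ i ∈ range (n+1), ((n:ℝ) + i + 1) = (n:ℝ) + 1 + i := fun i _ => by ring
      rw [Finset.prod_congr rfl hc, hps, show n + (n+1) = 2*n+1 from by omega]
    have hfn : (n.factorial : ℝ) ≠ 0 := by positivity
    have hprn : (∏ i ∈ range (n+1), ((n:ℝ) + i + 1)) ≠ 0 := by positivity
    have hLc : Lc n n = ((2*n).factorial : ℝ) / ((n.factorial:ℝ))^2 := by
      rw [Lc]
      have : (-1:ℝ)^(n+n) = 1 := by
        rw [show n + n = 2*n by ring, pow_mul]; norm_num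
      rw [this, Nat.sub_self, Nat.factorial_zero, show n + n = 2*n by ring]
      simp
    rw [hLc]
    have hfact : ((2*n+1).factorial : ℝ) = (2*(n:ℝ)+1) * ((2*n).factorial : ℝ) := by
      rw [Nat.factorial_succ]; push_cast; ring
    have h2n : ((2*n).factorial : ℝ) ≠ 0 := by positivity
    have hden : (2*(n:ℝ)+1) ≠ 0 := by positivity
    have hprod : (∏ i ∈ range (n+1), ((n:ℝ) + i + 1)) = (2*(n:ℝ)+1) * ((2*n).factorial : ℝ) / n.factorial := by
      rw [← hfact, eq_div_iff hfn, hpr]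
    rw [hprod]
    field_simp
  · intro k hk hne
    rw [mem_range, Nat.lt_succ_iff] at hk
    rw [keyS n k]
    rw [Finset.prod_eq_zero (mem_range.mpr (lt_of_le_of_ne hk hne)) (by simp : ((k:ℝ) - k) = 0)]
    simp
  · intro h; exact absurd (mem_range.mpr (Nat.lt_succ_self n)) h

/-- **Orthogonality of the shifted Legendre polynomials on `[0, X]`.**
`∫₀ˣ P̂_n P̂_m = 0` for `n ≠ m`, and `∫₀ˣ P̂_n² = X/(2n+1)`. -/
theorem shiftedLegendre_orthogonality (X : ℝ) (hX : 0 < X) (m n : ℕ) :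
    (n ≠ m → ∫ x in (0:ℝ)..X, shiftedLegendre X n x * shiftedLegendre X m x = 0) ∧
    ∫ x in (0:ℝ)..X, (shiftedLegendre X n x) ^ 2 = X / (2 * (n : ℝ) + 1) := by
  constructor
  · intro hnm
    rcases lt_or_gt_of_ne hnm with h | h
    · have hswap : (∫ x in (0:ℝ)..X, shiftedLegendre X n x * shiftedLegendre X m x)
          = ∫ x in (0:ℝ)..X, shiftedLegendre X m x * shiftedLegendre X n x := by
        apply intervalIntegral.integral_congr
        intro x _
        exact mul_comm _ _
      rw [hswap]
      exact ortho_lt X hX h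
    · exact ortho_lt X hX h
  · simp only [sq]
    exact diag_eval X hX n
end
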